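/- Let H_3^r be the r-uniform hypergraph with r+1 vertices and 3 edges. Then for every n ≥ r, ex(n, H_3^r) ≥ (1/n)·C(n,r) + (1/r)·∑_{d=0}^{⌊n/r⌋−1} C(n−1−r·d, r−1), and consequently ex(n, H_3^r) ≥ (1/r²)·C(n,r). -/

import Mathlib

/-- `G` contains no copy of `H_k^r`, the `r`-uniform hypergraph with `r+1` vertices
and `k` edges: no set `B` of `r+1` vertices contains `k` vertices `z` with all the
sets `B \ {z}` being edges of `G`. -/
def DaisyFree (r k : ℕ) {V : Type*} [DecidableEq V] (G : Finset (Finset V)) : Prop :=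
  ¬ ∃ B : Finset V, B.card = r + 1 ∧ ∃ Z ⊆ B, Z.card = k ∧ ∀ z ∈ Z, B.erase z ∈ G

open Finset
open Fin.NatCast Fin.CommRing

section Aux
variable {n : ℕ} [NeZero n]


/-- minimum circular gap of a finset of `Fin n` -/
noncomputable def d2 (A : Finset (Fin n)) : ℕ :=
  sInf ((fun p : Fin n × Fin n => (p.2 - p.1).val) ''
    {p : Fin n × Fin n | p.1 ∈ A ∧ p.2 ∈ A ∧ p.1 ≠ p.2})

omit [NeZero n] in
lemma d2_le {A : Finset (Fin n)} {x y : Fin n} (hx : x ∈ A) (hy : y ∈ A) (hxy : x ≠ y) :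
    d2 A ≤ (y - x).val :=
  Nat.sInf_le ⟨(x, y), ⟨hx, hy, hxy⟩, rfl⟩

omit [NeZero n] in
lemma d2_spec {A : Finset (Fin n)} (h : 1 < A.card) :
    ∃ x ∈ A, ∃ y ∈ A, x ≠ y ∧ d2 A = (y - x).val := by
  obtain ⟨x, hx, y, hy, hxy⟩ := Finset.one_lt_card.mp h
  have hne : ((fun p : Fin n × Fin n => (p.2 - p.1).val) ''
      {p : Fin n × Fin n | p.1 ∈ A ∧ p.2 ∈ A ∧ p.1 ≠ p.2}).Nonempty :=
    ⟨_, ⟨(x, y), ⟨hx, hy, hxy⟩, rfl⟩⟩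
  obtain ⟨⟨a, b⟩, ⟨ha, hb, hab⟩, hv⟩ := Nat.sInf_mem hne
  exact ⟨a, ha, b, hb, hab, hv.symm⟩

lemma fin_sub_val_le {u v : ℕ} (hv : v < n) (h : u ≤ v) :
    ((v : Fin n) - (u : Fin n)).val = v - u := by
  rw [Fin.sub_val_of_le, Fin.val_cast_of_lt hv, Fin.val_cast_of_lt (lt_of_le_of_lt h hv)]
  rw [Fin.le_def, Fin.val_cast_of_lt hv, Fin.val_cast_of_lt (lt_of_le_of_lt h hv)]
  exact h

lemma fin_sub_val_gt {u v : ℕ} (hu : u < n) (h : v < u) :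
    ((v : Fin n) - (u : Fin n)).val = n + v - u := by
  have : ((v : Fin n) - (u : Fin n)) = ((n + v - u : ℕ) : Fin n) := by
    push_cast [Nat.cast_sub (by omega : u ≤ n + v)]
    simp
  rw [this, Fin.val_cast_of_lt (by omega)]

lemma d2_le_div {r : ℕ} (hr : 2 ≤ r) {A : Finset (Fin n)} (hA : A.card = r) :
    d2 A ≤ n / r := by
  obtain ⟨x₀, hx₀, y₀, hy₀, hne₀, hd⟩ := d2_spec (by omega : 1 < A.card)
  set g := d2 A with hg
  have hgn : g < n := hd ▸ (y₀ - x₀).isLt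
  set t : Fin n → Finset (Fin n) := fun x => (range g).image (fun u : ℕ => x + (u : Fin n))
    with ht
  have hcard : ∀ x : Fin n, (t x).card = g := by
    intro x
    rw [ht]
    rw [Finset.card_image_of_injOn, Finset.card_range]
    intro u hu v hv huv
    simp only [Finset.mem_coe, Finset.mem_range] at hu hv
    have h2 : (u : Fin n) = (v : Fin n) := add_left_cancel huv
    have := congrArg Fin.val h2
    rwa [Fin.val_cast_of_lt (by omega), Fin.val_cast_of_lt (by omega)] at this
  have hdisj : ∀ x ∈ A, ∀ y ∈ A, x ≠ y → Disjoint (t x) (t y) := by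
    intro x hx y hy hxy
    rw [Finset.disjoint_left]
    rintro z hz hz'
    simp only [ht, Finset.mem_image, Finset.mem_range] at hz hz'
    obtain ⟨u, hu, rfl⟩ := hz
    obtain ⟨v, hv, heq⟩ := hz'
    -- heq : y + v = x + u
    rcases le_or_gt v u with h | h
    · have hyx : y - x = (u : Fin n) - (v : Fin n) :=
        sub_eq_sub_iff_add_eq_add.mpr (by linear_combination heq)
      have hval : (y - x).val = u - v := by rw [hyx, fin_sub_val_le (by omega) h]
      have hle := d2_le hx hy hxy
      omega
    · have hxy' : x - y = (v : Fin n) - (u : Fin n) :=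
        sub_eq_sub_iff_add_eq_add.mpr (by linear_combination -heq)
      have hval : (x - y).val = v - u := by rw [hxy', fin_sub_val_le (by omega) (le_of_lt h)]
      have hle := d2_le hy hx (Ne.symm hxy)
      omega
  have hsum : r * g ≤ n := by
    have h1 : (A.biUnion t).card = ∑ x ∈ A, (t x).card := Finset.card_biUnion hdisj
    have h2 : (A.biUnion t).card ≤ n := by
      have := Finset.card_le_card (Finset.subset_univ (A.biUnion t))
      simpa using this
    have h3 : ∑ x ∈ A, (t x).card = r * g := by
      rw [Finset.sum_congr rfl (fun x _ => hcard x), Finset.sum_const, hA, smul_eq_mul]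
    omega
  rw [Nat.le_div_iff_mul_le (by omega : 0 < r), mul_comm]
  exact hsum

lemma d2_lt_n {r : ℕ} (hr : 2 ≤ r) (hn : 0 < n) {A : Finset (Fin n)} (hA : A.card = r) :
    d2 A < n :=
  lt_of_le_of_lt (d2_le_div hr hA) (Nat.div_lt_self hn (by omega))


noncomputable def Gj (n r : ℕ) [NeZero n] (j : Fin n) : Finset (Finset (Fin n)) :=
  (Finset.powersetCard r (univ : Finset (Fin n))).filter
    (fun A => (j + ∑ x ∈ A, x).val ≤ d2 A)

lemma Gj_card (r : ℕ) (j : Fin n) : ∀ e ∈ Gj n r j, e.card = r := by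
  intro e he
  have := (Finset.mem_filter.mp he).1
  exact (Finset.mem_powersetCard.mp this).2

lemma Gj_daisyFree (r : ℕ) (j : Fin n) : DaisyFree r 3 (Gj n r j) := by
  rintro ⟨B, hB, Z, hZB, hZ3, hZ⟩
  set s : Fin n := j + ∑ x ∈ B, x with hs
  have hmem : ∀ z ∈ Z, (s - z).val ≤ d2 (B.erase z) := by
    intro z hz
    have h1 := (Finset.mem_filter.mp (hZ z hz)).2
    have h2 : ∑ x ∈ B.erase z, x = (∑ x ∈ B, x) - z :=
      Finset.sum_erase_eq_sub (hZB hz)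
    rw [h2] at h1
    have h3 : j + ((∑ x ∈ B, x) - z) = s - z := by rw [hs]; ring
    rwa [h3] at h1
  have key : ∀ a ∈ Z, ∀ b ∈ Z, ∀ c ∈ Z, a ≠ c → b ≠ c →
      (s - a).val < (s - b).val → (s - b).val < (s - c).val → False := by
    intro a ha b hb c hc hac hbc h1 h2
    have hab : a ≠ b := by
      intro h; rw [h] at h1; omega
    have haE : a ∈ B.erase c := Finset.mem_erase.mpr ⟨hac, hZB ha⟩
    have hbE : b ∈ B.erase c := Finset.mem_erase.mpr ⟨hbc, hZB hb⟩
    have hd : d2 (B.erase c) ≤ (a - b).val := d2_le hbE haE (Ne.symm hab)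
    have hsub : a - b = (s - b) - (s - a) := by ring
    have hval : ((s - b) - (s - a)).val = (s - b).val - (s - a).val :=
      Fin.sub_val_of_le (by rw [Fin.le_def]; omega)
    have hc' := hmem c hc
    rw [hsub, hval] at hd
    omega
  obtain ⟨z1, z2, z3, h12, h13, h23, hZ'⟩ := Finset.card_eq_three.mp hZ3
  have m1 : z1 ∈ Z := by rw [hZ']; simp
  have m2 : z2 ∈ Z := by rw [hZ']; simp
  have m3 : z3 ∈ Z := by rw [hZ']; simp
  have inj : ∀ x y : Fin n, x ≠ y → (s - x).val ≠ (s - y).val := by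
    intro x y hxy h
    exact hxy (sub_right_injective (Fin.val_injective h))
  have n12 := inj _ _ h12
  have n13 := inj _ _ h13
  have n23 := inj _ _ h23
  rcases lt_trichotomy ((s - z1).val) ((s - z2).val) with h1 | h1 | h1
  · rcases lt_trichotomy ((s - z2).val) ((s - z3).val) with h2 | h2 | h2
    · exact key z1 m1 z2 m2 z3 m3 h13 h23 h1 h2
    · exact n23 h2
    · rcases lt_trichotomy ((s - z1).val) ((s - z3).val) with h3 | h3 | h3
      · exact key z1 m1 z3 m3 z2 m2 h12 (Ne.symm h23) h3 h2
      · exact n13 h3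
      · exact key z3 m3 z1 m1 z2 m2 (Ne.symm h23) h12 h3 h1
  · exact n12 h1
  · rcases lt_trichotomy ((s - z1).val) ((s - z3).val) with h2 | h2 | h2
    · exact key z2 m2 z1 m1 z3 m3 h23 h13 h1 h2
    · exact n13 h2
    · rcases lt_trichotomy ((s - z2).val) ((s - z3).val) with h3 | h3 | h3
      · exact key z2 m2 z3 m3 z1 m1 (Ne.symm h12) (Ne.symm h13) h3 h2
      · exact n23 h3
      · exact key z3 m3 z2 m2 z1 m1 (Ne.symm h13) (Ne.symm h12) h3 h1
  

lemma count_j (m : ℕ) (hm : m < n) (s : Fin n) :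
    (univ.filter fun j : Fin n => (j + s).val ≤ m).card = m + 1 := by
  rw [← Finset.card_range (m + 1)]
  apply Finset.card_nbij' (i := fun j => (j + s).val) (j := fun k => (k : Fin n) - s)
  · intro a ha
    simp only [Finset.mem_coe, Finset.mem_filter, Finset.mem_univ, true_and] at ha
    simp only [Finset.mem_coe, Finset.mem_range]
    omega
  · intro k hk
    simp only [Finset.mem_coe, Finset.mem_range] at hk
    simp only [Finset.mem_coe, Finset.mem_filter, Finset.mem_univ, true_and]
    rw [sub_add_cancel, Fin.val_cast_of_lt (by omega)]
    omega
  · intro a _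
    beta_reduce
    rw [Fin.cast_val_eq_self, add_sub_cancel_right]
  · intro k hk
    simp only [Finset.mem_coe, Finset.mem_range] at hk
    beta_reduce
    rw [sub_add_cancel, Fin.val_cast_of_lt (by omega)]

lemma sum_Gj_card (r : ℕ) (hr : 2 ≤ r) (hrn : r ≤ n) :
    ∑ j : Fin n, (Gj n r j).card
      = n.choose r + ∑ A ∈ Finset.powersetCard r (univ : Finset (Fin n)), d2 A := by
  have hn : 0 < n := by omega
  calc ∑ j : Fin n, (Gj n r j).card
      = ∑ j : Fin n, ∑ A ∈ Finset.powersetCard r (univ : Finset (Fin n)),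
          if (j + ∑ x ∈ A, x).val ≤ d2 A then 1 else 0 := by
        exact Finset.sum_congr rfl fun j _ => by rw [Gj, Finset.card_filter]
    _ = ∑ A ∈ Finset.powersetCard r (univ : Finset (Fin n)), ∑ j : Fin n,
          if (j + ∑ x ∈ A, x).val ≤ d2 A then 1 else 0 := Finset.sum_comm
    _ = ∑ A ∈ Finset.powersetCard r (univ : Finset (Fin n)), (d2 A + 1) := by
        refine Finset.sum_congr rfl fun A hA => ?_
        rw [← Finset.card_filter]
        exact count_j (d2 A) (d2_lt_n hr hn (Finset.mem_powersetCard.mp hA).2) _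
    _ = _ := by
        rw [Finset.sum_add_distrib, Finset.sum_const, Finset.card_powersetCard,
          Finset.card_univ, Fintype.card_fin, smul_eq_mul, mul_one, add_comm]

lemma sum_d2_eq (r : ℕ) (hr : 2 ≤ r) (hrn : r ≤ n) :
    ∑ A ∈ Finset.powersetCard r (univ : Finset (Fin n)), d2 A
      = ∑ d ∈ Finset.range (n / r),
          ((Finset.powersetCard r (univ : Finset (Fin n))).filter
            (fun A => d + 1 ≤ d2 A)).card := by
  calc ∑ A ∈ Finset.powersetCard r (univ : Finset (Fin n)), d2 A
      = ∑ A ∈ Finset.powersetCard r (univ : Finset (Fin n)),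
          ((Finset.range (n / r)).filter (fun d => d + 1 ≤ d2 A)).card := by
        refine Finset.sum_congr rfl fun A hA => ?_
        have hle : d2 A ≤ n / r := d2_le_div hr (Finset.mem_powersetCard.mp hA).2
        have : (Finset.range (n / r)).filter (fun d => d + 1 ≤ d2 A)
            = Finset.range (d2 A) := by
          ext k
          simp only [Finset.mem_filter, Finset.mem_range]
          omega
        rw [this, Finset.card_range]
    _ = ∑ A ∈ Finset.powersetCard r (univ : Finset (Fin n)), ∑ d ∈ Finset.range (n / r),
          if d + 1 ≤ d2 A then 1 else 0 := by
        exact Finset.sum_congr rfl fun A _ => by rw [Finset.card_filter]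
    _ = ∑ d ∈ Finset.range (n / r), ∑ A ∈ Finset.powersetCard r (univ : Finset (Fin n)),
          if d + 1 ≤ d2 A then 1 else 0 := Finset.sum_comm
    _ = _ := Finset.sum_congr rfl fun d _ => by rw [Finset.card_filter]

/-- the `i`-th selected position -/
def pf (d : ℕ) (T : Finset ℕ) (i : ℕ) : ℕ := (T.sort (· ≤ ·)).getD i 0 + (i + 1) * d + 1

/-- the constructed edge -/
def bA (n r d : ℕ) [NeZero n] (a : Fin n) (T : Finset ℕ) : Finset (Fin n) :=
  insert a ((Finset.range (r - 1)).image fun i => a + ((pf d T i : ℕ) : Fin n))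

section Facts
variable {r d m : ℕ} {T : Finset ℕ}
  (hr : 2 ≤ r) (hrdn : r * d + r ≤ n) (hm : m = n - 1 - r * d)
  (hTm : T ⊆ Finset.range m) (hTc : T.card = r - 1)

include hTc in
lemma pf_len : (T.sort (· ≤ ·)).length = r - 1 := by
  rw [Finset.length_sort, hTc]

include hTm hTc in
lemma pf_memT {i : ℕ} (hi : i < r - 1) : (T.sort (· ≤ ·)).getD i 0 < m := by
  have hlen : i < (T.sort (· ≤ ·)).length := by rw [pf_len hTc]; omega
  rw [List.getD_eq_getElem _ _ hlen]
  have : (T.sort (· ≤ ·))[i] ∈ T := Finset.mem_sort (α := ℕ) (· ≤ ·) |>.mp (List.getElem_mem hlen)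
  simpa using Finset.mem_range.mp (hTm this)

include hTc in
lemma pf_strict {i j : ℕ} (hij : i < j) (hj : j < r - 1) :
    (T.sort (· ≤ ·)).getD i 0 < (T.sort (· ≤ ·)).getD j 0 := by
  have hlen := pf_len (T := T) hTc
  have hi' : i < (T.sort (· ≤ ·)).length := by omega
  have hj' : j < (T.sort (· ≤ ·)).length := by omega
  rw [List.getD_eq_getElem _ _ hi', List.getD_eq_getElem _ _ hj']
  have hs := Finset.sortedLT_sort T
  exact hs.strictMono_get (show (⟨i, hi'⟩ : Fin _) < ⟨j, hj'⟩ from hij)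

lemma pf_lb {i : ℕ} : d + 1 ≤ pf d T i := by
  have : d ≤ (i + 1) * d := Nat.le_mul_of_pos_left d (by omega)
  unfold pf; omega

include hr hrdn hm hTm hTc in
lemma pf_ub {i : ℕ} (hi : i < r - 1) : pf d T i ≤ n - d - 1 := by
  have h1 := pf_memT hTm hTc hi
  have h2 : (i + 1) * d ≤ (r - 1) * d := Nat.mul_le_mul_right d (by omega)
  have h3 : (r - 1) * d + d = r * d := by
    have hr1 : r - 1 + 1 = r := by omega
    calc (r - 1) * d + d = ((r - 1) + 1) * d := (Nat.succ_mul _ _).symm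
      _ = r * d := by rw [hr1]
  unfold pf; omega

include hTc in
lemma pf_gap {i j : ℕ} (hij : i < j) (hj : j < r - 1) :
    pf d T i + d + 1 ≤ pf d T j := by
  have h1 := pf_strict hTc hij hj
  have h2 : (i + 1 + 1) * d ≤ (j + 1) * d := Nat.mul_le_mul_right d (by omega)
  have h3 : (i + 1 + 1) * d = (i + 1) * d + d := Nat.succ_mul _ _
  unfold pf; omega

include hr hrdn hm hTm hTc in
lemma pf_bounds {i : ℕ} (hi : i < r - 1) : 1 ≤ pf d T i ∧ pf d T i ≤ n - d - 1 :=
  ⟨by have := pf_lb (d := d) (T := T) (i := i); omega, pf_ub hr hrdn hm hTm hTc hi⟩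

include hr hrdn hm hTm hTc in
lemma bA_not_mem {a : Fin n} :
    a ∉ (Finset.range (r - 1)).image fun i => a + ((pf d T i : ℕ) : Fin n) := by
  intro h
  obtain ⟨i, hi, hia⟩ := Finset.mem_image.mp h
  have hi' : i < r - 1 := Finset.mem_range.mp hi
  obtain ⟨hb1, hb2⟩ := pf_bounds hr hrdn hm hTm hTc hi'
  have h0 : ((pf d T i : ℕ) : Fin n) = 0 := by
    have := hia
    nth_rewrite 2 [show a = a + 0 by ring] at this
    exact add_left_cancel this
  have := congrArg Fin.val h0
  rw [Fin.val_cast_of_lt (by omega)] at this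
  simp at this
  omega

include hr hrdn hm hTm hTc in
lemma bA_inj_image {i j : ℕ} (hi : i < r - 1) (hj : j < r - 1) {a : Fin n}
    (h : a + ((pf d T i : ℕ) : Fin n) = a + ((pf d T j : ℕ) : Fin n)) : i = j := by
  have hpf : pf d T i = pf d T j := by
    have h2 : ((pf d T i : ℕ) : Fin n) = ((pf d T j : ℕ) : Fin n) := add_left_cancel h
    have := congrArg Fin.val h2
    obtain ⟨_, hbi⟩ := pf_bounds hr hrdn hm hTm hTc hi
    obtain ⟨_, hbj⟩ := pf_bounds hr hrdn hm hTm hTc hj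
    rwa [Fin.val_cast_of_lt (by omega), Fin.val_cast_of_lt (by omega)] at this
  by_contra hne
  rcases Nat.lt_or_ge i j with h' | h'
  · have := pf_gap (d := d) hTc h' hj; omega
  · have h'' : j < i := by omega
    have := pf_gap (d := d) hTc h'' hi; omega

include hr hrdn hm hTm hTc in
lemma bA_erase {a : Fin n} :
    (bA n r d a T).erase a
      = (Finset.range (r - 1)).image fun i => a + ((pf d T i : ℕ) : Fin n) := by
  rw [bA, Finset.erase_insert (bA_not_mem hr hrdn hm hTm hTc)]

include hr hrdn hm hTm hTc in
lemma bA_card {a : Fin n} : (bA n r d a T).card = r := by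
  rw [bA, Finset.card_insert_of_notMem (bA_not_mem hr hrdn hm hTm hTc),
    Finset.card_image_of_injOn, Finset.card_range]
  · omega
  · intro i hi j hj hij
    exact bA_inj_image hr hrdn hm hTm hTc
      (Finset.mem_range.mp (Finset.mem_coe.mp hi))
      (Finset.mem_range.mp (Finset.mem_coe.mp hj)) hij

include hr hrdn hm hTm hTc in
lemma mem_bA_val {a x : Fin n} (hx : x ∈ bA n r d a T) :
    ∃ q : ℕ, q ≤ n - d - 1 ∧ (q = 0 ∨ ∃ i, i < r - 1 ∧ q = pf d T i) ∧ x = a + (q : Fin n) := by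
  rw [bA, Finset.mem_insert] at hx
  rcases hx with rfl | hx
  · exact ⟨0, by omega, Or.inl rfl, by simp⟩
  · obtain ⟨i, hi, rfl⟩ := Finset.mem_image.mp hx
    have hi' : i < r - 1 := Finset.mem_range.mp hi
    exact ⟨pf d T i, (pf_bounds hr hrdn hm hTm hTc hi').2, Or.inr ⟨i, hi', rfl⟩, rfl⟩

include hr hrdn hm hTm hTc in
lemma d2_bA {a : Fin n} : d + 1 ≤ d2 (bA n r d a T) := by
  have hcard : 1 < (bA n r d a T).card := by
    rw [bA_card hr hrdn hm hTm hTc]; omega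
  obtain ⟨x, hx, y, hy, hxy, hval⟩ := d2_spec hcard
  obtain ⟨qx, hqx1, hqx2, rfl⟩ := mem_bA_val hr hrdn hm hTm hTc hx
  obtain ⟨qy, hqy1, hqy2, rfl⟩ := mem_bA_val hr hrdn hm hTm hTc hy
  have hnd : d + 1 ≤ n ∧ qx < n ∧ qy < n := by
    have h2d : 2 * d ≤ r * d := Nat.mul_le_mul_right d hr
    clear hval hqx2 hqy2 hxy hx hy
    omega
  have hsub : (a + (qy : Fin n)) - (a + (qx : Fin n)) = (qy : Fin n) - (qx : Fin n) := by ring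
  have hqne : qx ≠ qy := by
    rintro rfl; exact hxy rfl
  rw [hsub] at hval
  rcases Nat.lt_or_ge qx qy with hlt | hge
  · rw [fin_sub_val_le (by omega) (by omega)] at hval
    rcases hqy2 with rfl | ⟨j, hj, rfl⟩
    · omega
    · rcases hqx2 with rfl | ⟨i, hi, rfl⟩
      · have := pf_lb (d := d) (T := T) (i := j); omega
      · have hij : i < j := by
          by_contra h'
          rcases Nat.eq_or_lt_of_le (Nat.le_of_not_lt h') with rfl | h''
          · omega
          · have := pf_gap (d := d) hTc h'' hi; omega
        have := pf_gap (d := d) hTc hij hj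
        omega
  · have hlt : qy < qx := by omega
    rw [fin_sub_val_gt (by omega) hlt] at hval
    rw [hval]
    clear hval hsub hqne hxy hx hy hqx2 hqy2
    omega

include hr hrdn hm hTm hTc in
lemma bA_mem_Ad {a : Fin n} :
    bA n r d a T ∈ (Finset.powersetCard r (univ : Finset (Fin n))).filter
      (fun A => d + 1 ≤ d2 A) :=
  Finset.mem_filter.mpr ⟨Finset.mem_powersetCard.mpr
    ⟨Finset.subset_univ _, bA_card hr hrdn hm hTm hTc⟩, d2_bA hr hrdn hm hTm hTc⟩

end Facts

section Inj
variable {r d m : ℕ}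
  (hr : 2 ≤ r) (hrdn : r * d + r ≤ n) (hm : m = n - 1 - r * d)

include hr hrdn hm in
lemma bA_image_P {a : Fin n} {T : Finset ℕ} (hTm : T ⊆ Finset.range m)
    (hTc : T.card = r - 1) :
    ((bA n r d a T).erase a).image (fun x => (x - a).val)
      = (Finset.range (r - 1)).image (pf d T) := by
  rw [bA_erase hr hrdn hm hTm hTc, Finset.image_image]
  refine Finset.image_congr ?_
  intro i hi
  have hi' : i < r - 1 := Finset.mem_range.mp (Finset.mem_coe.mp hi)
  obtain ⟨hb1, hb2⟩ := pf_bounds hr hrdn hm hTm hTc hi'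
  simp only [Function.comp_apply]
  rw [add_sub_cancel_left, Fin.val_cast_of_lt (by omega)]

include hr hrdn hm in
lemma bA_injT {a : Fin n} {T T' : Finset ℕ}
    (hTm : T ⊆ Finset.range m) (hTc : T.card = r - 1)
    (hTm' : T' ⊆ Finset.range m) (hTc' : T'.card = r - 1)
    (h : bA n r d a T = bA n r d a T') : T = T' := by
  have hP : ((bA n r d a T).erase a).image (fun x => (x - a).val)
      = (Finset.range (r - 1)).image (pf d T) := bA_image_P hr hrdn hm hTm hTc
  have hP' : ((bA n r d a T).erase a).image (fun x => (x - a).val)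
      = (Finset.range (r - 1)).image (pf d T') := by
    rw [h]; exact bA_image_P hr hrdn hm hTm' hTc'
  set P := ((bA n r d a T).erase a).image (fun x => (x - a).val) with hPdef
  have hinj : ∀ (T₀ : Finset ℕ), T₀ ⊆ Finset.range m → T₀.card = r - 1 →
      Set.InjOn (pf d T₀) (Finset.range (r - 1)) := by
    intro T₀ hTm₀ hTc₀ i hi j hj hij
    have hi' : i < r - 1 := Finset.mem_range.mp (Finset.mem_coe.mp hi)
    have hj' : j < r - 1 := Finset.mem_range.mp (Finset.mem_coe.mp hj)
    by_contra hne
    rcases Nat.lt_or_ge i j with h' | h'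
    · have := pf_gap (d := d) hTc₀ h' hj'; omega
    · have h'' : j < i := by omega
      have := pf_gap (d := d) hTc₀ h'' hi'; omega
  have hcP : P.card = r - 1 := by
    rw [hP, Finset.card_image_of_injOn (hinj T hTm hTc), Finset.card_range]
  have hmono : ∀ (T₀ : Finset ℕ), T₀ ⊆ Finset.range m → T₀.card = r - 1 →
      StrictMono (fun i : Fin (r - 1) => pf d T₀ i.val) := by
    intro T₀ hTm₀ hTc₀ i j hij
    show pf d T₀ i.val < pf d T₀ j.val
    have := pf_gap (d := d) hTc₀ (show i.val < j.val from hij) j.isLt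
    omega
  have hmem : ∀ i : Fin (r - 1), pf d T i.val ∈ P := by
    intro i
    rw [hP]
    exact Finset.mem_image.mpr ⟨i.val, Finset.mem_range.mpr i.isLt, rfl⟩
  have hmem' : ∀ i : Fin (r - 1), pf d T' i.val ∈ P := by
    intro i
    rw [hP']
    exact Finset.mem_image.mpr ⟨i.val, Finset.mem_range.mpr i.isLt, rfl⟩
  have hf := Finset.orderEmbOfFin_unique hcP hmem (hmono T hTm hTc)
  have hf' := Finset.orderEmbOfFin_unique hcP hmem' (hmono T' hTm' hTc')
  have hpf_eq : ∀ i : Fin (r - 1), pf d T i.val = pf d T' i.val := by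
    intro i
    have h1 := congrFun hf i
    have h2 := congrFun hf' i
    rw [h1, h2]
  have hlist : T.sort (· ≤ ·) = T'.sort (· ≤ ·) := by
    apply List.ext_getElem
    · rw [Finset.length_sort, Finset.length_sort, hTc, hTc']
    · intro i h1 h2
      have hi : i < r - 1 := by rw [Finset.length_sort, hTc] at h1; exact h1
      have := hpf_eq ⟨i, hi⟩
      unfold pf at this
      simp only at this
      rw [← List.getD_eq_getElem _ 0 h1, ← List.getD_eq_getElem _ 0 h2]
      omega
  calc T = (T.sort (· ≤ ·)).toFinset := (Finset.sort_toFinset _ _).symm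
    _ = (T'.sort (· ≤ ·)).toFinset := by rw [hlist]
    _ = T' := Finset.sort_toFinset _ _

end Inj

lemma count_Ad {r d : ℕ} (hr : 2 ≤ r) (hrn : r ≤ n) (hd : d < n / r) :
    n * ((n - 1 - r * d).choose (r - 1))
      ≤ r * ((Finset.powersetCard r (univ : Finset (Fin n))).filter
          (fun A => d + 1 ≤ d2 A)).card := by
  have hrdn : r * d + r ≤ n := by
    have h1 : d + 1 ≤ n / r := hd
    have h2 := Nat.mul_le_mul_left r h1
    have h3 : r * (n / r) ≤ n := Nat.mul_div_le n r
    have h4 : r * (d + 1) = r * d + r := by ring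
    omega
  set m := n - 1 - r * d with hm
  set Ad := (Finset.powersetCard r (univ : Finset (Fin n))).filter
    (fun A => d + 1 ≤ d2 A) with hAd
  set D := (univ : Finset (Fin n)) ×ˢ Finset.powersetCard (r - 1) (Finset.range m) with hD
  have hDcard : D.card = n * m.choose (r - 1) := by
    rw [hD, Finset.card_product, Finset.card_univ, Fintype.card_fin,
      Finset.card_powersetCard, Finset.card_range]
  have hmemD : ∀ q ∈ D, q.2 ⊆ Finset.range m ∧ q.2.card = r - 1 := by
    intro q hq
    rw [hD, Finset.mem_product] at hq
    exact Finset.mem_powersetCard.mp hq.2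
  have key : D.card ≤ (Ad.biUnion (fun A => {A} ×ˢ A)).card := by
    apply Finset.card_le_card_of_injOn (fun q => (bA n r d q.1 q.2, q.1))
    · intro q hq
      obtain ⟨hq1, hq2⟩ := hmemD q hq
      refine Finset.mem_biUnion.mpr ⟨bA n r d q.1 q.2, ?_, ?_⟩
      · rw [hAd]; exact bA_mem_Ad hr hrdn hm hq1 hq2
      · exact Finset.mem_product.mpr ⟨Finset.mem_singleton_self _, Finset.mem_insert_self _ _⟩
    · intro q hq q' hq' heq
      obtain ⟨hq1, hq2⟩ := hmemD q (Finset.mem_coe.mp hq)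
      obtain ⟨hq1', hq2'⟩ := hmemD q' (Finset.mem_coe.mp hq')
      have h1 : q.1 = q'.1 := congrArg Prod.snd heq
      have h2 : bA n r d q.1 q.2 = bA n r d q'.1 q'.2 := congrArg Prod.fst heq
      rw [← h1] at h2
      exact Prod.ext h1 (bA_injT hr hrdn hm hq1 hq2 hq1' hq2' h2)
  have hScard : (Ad.biUnion (fun A => {A} ×ˢ A)).card = r * Ad.card := by
    rw [Finset.card_biUnion]
    · have : ∀ A ∈ Ad, ({A} ×ˢ A).card = r := by
        intro A hA
        rw [Finset.card_product, Finset.card_singleton, one_mul]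
        rw [hAd, Finset.mem_filter] at hA
        exact (Finset.mem_powersetCard.mp hA.1).2
      rw [Finset.sum_congr rfl this, Finset.sum_const, smul_eq_mul, mul_comm]
    · intro A hA B hB hAB
      rw [Function.onFun, Finset.disjoint_left]
      rintro p hp hp'
      have e1 : p.1 = A := Finset.mem_singleton.mp (Finset.mem_product.mp hp).1
      have e2 : p.1 = B := Finset.mem_singleton.mp (Finset.mem_product.mp hp').1
      exact hAB (e1 ▸ e2 ▸ rfl)
  omega


end Aux


lemma blocks (n r : ℕ) (q : ℕ) :
    ∑ k ∈ Finset.range (r * q), (n - 1 - k).choose (r - 1)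
      ≤ r * ∑ d ∈ Finset.range q, (n - 1 - r * d).choose (r - 1) := by
  induction q with
  | zero => simp
  | succ q ih =>
    rw [Finset.sum_range_succ, show r * (q + 1) = r * q + r by ring]
    have hsplit : ∑ k ∈ Finset.range (r * q + r), (n - 1 - k).choose (r - 1)
        = ∑ k ∈ Finset.range (r * q), (n - 1 - k).choose (r - 1)
          + ∑ k ∈ Finset.Ico (r * q) (r * q + r), (n - 1 - k).choose (r - 1) := by
      simp only [Finset.range_eq_Ico]
      exact (Finset.sum_Ico_consecutive _ (Nat.zero_le (r * q)) (by omega)).symm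
    rw [hsplit]
    have hblock : ∑ k ∈ Finset.Ico (r * q) (r * q + r), (n - 1 - k).choose (r - 1)
        ≤ r * (n - 1 - r * q).choose (r - 1) := by
      calc ∑ k ∈ Finset.Ico (r * q) (r * q + r), (n - 1 - k).choose (r - 1)
          ≤ ∑ _k ∈ Finset.Ico (r * q) (r * q + r), (n - 1 - r * q).choose (r - 1) := by
            refine Finset.sum_le_sum fun k hk => Nat.choose_le_choose _ ?_
            have := (Finset.mem_Ico.mp hk).1
            omega
        _ = r * (n - 1 - r * q).choose (r - 1) := by
            rw [Finset.sum_const, Nat.card_Ico, smul_eq_mul]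
            congr 1
            omega
    rw [Nat.mul_add]
    exact Nat.add_le_add ih hblock

lemma hockey {n r : ℕ} (hr : 2 ≤ r) (hrn : r ≤ n) :
    n.choose r ≤ r * ∑ d ∈ Finset.range (n / r), (n - 1 - r * d).choose (r - 1) := by
  have h0 : ∑ m ∈ Finset.Icc (r - 1) (n - 1), m.choose (r - 1) = n.choose r := by
    have := Nat.sum_Icc_choose (n - 1) (r - 1)
    rwa [show n - 1 + 1 = n by omega, show r - 1 + 1 = r by omega] at this
  have h1 : ∑ m ∈ Finset.Icc (r - 1) (n - 1), m.choose (r - 1)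
      ≤ ∑ m ∈ Finset.range n, m.choose (r - 1) := by
    apply Finset.sum_le_sum_of_subset
    intro x hx
    have := Finset.mem_Icc.mp hx
    exact Finset.mem_range.mpr (by omega)
  have h2 : ∑ m ∈ Finset.range n, m.choose (r - 1)
      = ∑ k ∈ Finset.range n, (n - 1 - k).choose (r - 1) :=
    (Finset.sum_range_reflect (fun m => m.choose (r - 1)) n).symm
  have h3 : ∑ k ∈ Finset.range n, (n - 1 - k).choose (r - 1)
      = ∑ k ∈ Finset.range (r * (n / r)), (n - 1 - k).choose (r - 1)
        + ∑ k ∈ Finset.Ico (r * (n / r)) n, (n - 1 - k).choose (r - 1) := by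
    simp only [Finset.range_eq_Ico]
    exact (Finset.sum_Ico_consecutive _ (Nat.zero_le (r * (n / r))) (Nat.mul_div_le n r)).symm
  have h4 : ∑ k ∈ Finset.Ico (r * (n / r)) n, (n - 1 - k).choose (r - 1) = 0 := by
    apply Finset.sum_eq_zero
    intro k hk
    have hk' := Finset.mem_Ico.mp hk
    apply Nat.choose_eq_zero_of_lt
    have hmod := Nat.div_add_mod n r
    have hmlt : n % r < r := Nat.mod_lt n (by omega)
    omega
  have h5 := blocks n r (n / r)
  omega

/-- `ex(n, H_3^r) ≥ (1/n)·C(n,r) + (1/r)·∑_{d=0}^{⌊n/r⌋−1} C(n−1−rd, r−1)`,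
and consequently `ex(n, H_3^r) ≥ (1/r²)·C(n,r)`. -/
theorem statement13 (n r : ℕ) (hr : 2 ≤ r) (hrn : r ≤ n) :
    ∃ G : Finset (Finset (Fin n)), (∀ e ∈ G, e.card = r) ∧ DaisyFree r 3 G ∧
      (1 / (n : ℝ)) * (n.choose r : ℝ) +
        (1 / (r : ℝ)) * ∑ d ∈ Finset.range (n / r), ((n - 1 - r * d).choose (r - 1) : ℝ)
        ≤ (G.card : ℝ) ∧
      (1 / (r : ℝ) ^ 2) * (n.choose r : ℝ) ≤ (G.card : ℝ) := by
  haveI : NeZero n := ⟨by omega⟩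
  haveI : Nonempty (Fin n) := ⟨⟨0, by omega⟩⟩
  obtain ⟨j₀, -, hj₀⟩ := Finset.exists_max_image (univ : Finset (Fin n))
    (fun j => (Gj n r j).card) Finset.univ_nonempty
  refine ⟨Gj n r j₀, Gj_card r j₀, Gj_daisyFree r j₀, ?_⟩
  set g := (Gj n r j₀).card with hg
  set S2 := ∑ A ∈ Finset.powersetCard r (univ : Finset (Fin n)), d2 A with hS2def
  set SC := ∑ d ∈ Finset.range (n / r), (n - 1 - r * d).choose (r - 1) with hSCdef
  have hn0 : 0 < n := by omega
  have hsum : ∑ j : Fin n, (Gj n r j).card = n.choose r + S2 := sum_Gj_card r hr hrn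
  have hmax : n.choose r + S2 ≤ n * g := by
    rw [← hsum]
    calc ∑ j : Fin n, (Gj n r j).card ≤ ∑ _j : Fin n, g :=
          Finset.sum_le_sum fun j _ => hj₀ j (Finset.mem_univ j)
      _ = n * g := by rw [Finset.sum_const, Finset.card_univ, Fintype.card_fin, smul_eq_mul]
  have hS2 : n * SC ≤ r * S2 := by
    rw [hS2def, sum_d2_eq r hr hrn, hSCdef, Finset.mul_sum, Finset.mul_sum]
    exact Finset.sum_le_sum fun d hd => count_Ad hr hrn (Finset.mem_range.mp hd)
  have hH : n.choose r ≤ r * SC := hockey hr hrn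
  have key1 : r * n.choose r + n * SC ≤ r * (n * g) := by
    calc r * n.choose r + n * SC ≤ r * n.choose r + r * S2 := by omega
      _ = r * (n.choose r + S2) := by ring
      _ ≤ r * (n * g) := Nat.mul_le_mul_left r hmax
  have key2 : n.choose r ≤ r * r * g := by
    have e1 : n * n.choose r ≤ n * (r * SC) := Nat.mul_le_mul_left n hH
    have e2 : n * (r * SC) = r * (n * SC) := by ring
    have e3 : r * (n * SC) ≤ r * (r * S2) := Nat.mul_le_mul_left r hS2
    have e4 : S2 ≤ n * g := by omega
    have e5 : r * (r * S2) ≤ r * (r * (n * g)) :=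
      Nat.mul_le_mul_left r (Nat.mul_le_mul_left r e4)
    have e6 : n * n.choose r ≤ n * (r * r * g) := by
      calc n * n.choose r ≤ r * (r * (n * g)) := by omega
        _ = n * (r * r * g) := by ring
    exact Nat.le_of_mul_le_mul_left e6 hn0
  have hnR : (0 : ℝ) < n := by exact_mod_cast hn0
  have hrR : (0 : ℝ) < r := by positivity
  have hcast : ((SC : ℕ) : ℝ)
      = ∑ d ∈ Finset.range (n / r), ((n - 1 - r * d).choose (r - 1) : ℝ) := by
    rw [hSCdef]; push_cast; rfl
  constructor
  · rw [← hcast]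
    have k1R : (r : ℝ) * (n.choose r : ℝ) + (n : ℝ) * (SC : ℝ)
        ≤ (r : ℝ) * ((n : ℝ) * (g : ℝ)) := by exact_mod_cast key1
    rw [one_div, one_div, inv_mul_eq_div, inv_mul_eq_div,
      div_add_div _ _ (ne_of_gt hnR) (ne_of_gt hrR), div_le_iff₀ (mul_pos hnR hrR)]
    nlinarith [k1R]
  · have k2R : ((n.choose r : ℕ) : ℝ) ≤ (r : ℝ) * (r : ℝ) * (g : ℝ) := by exact_mod_cast key2
    rw [one_div, inv_mul_eq_div, div_le_iff₀ (by positivity)]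
    nlinarith [k2R]
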